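/- Let h ≥ 1, β ≥ 0, r₁,...,r_h > 0 with Σ r_j = 1, and 0 ≤ γ₁ < ... < γ_h. Consider a two-resource instance with r = 1 total demand: resource 1 has constant latency l₁(y) = 1 and deviation δ₁(y) = β; resource 2 has deviation δ₂ ≡ 0 and a strictly increasing continuous latency l₂ with l₂(0) = 1 + ε' and l₂(r_j + ... + r_h) = 1 + γ_j·β, where 0 < ε' < γ_j·β, for a fixed j. Then the flow x = (x₁, x₂) = (r₁+...+r_{j−1}, r_j+...+r_h), in which classes 1,...,j−1 use resource 1 and classes j,...,h use resource 2, is a β-deviated Nash flow: for every class i < j, l₁(x₁) + γ_i·δ₁(x₁) ≤ l₂(x₂) + γ_i·δ₂(x₂), and for every class i ≥ j, l₂(x₂) + γ_i·δ₂(x₂) ≤ l₁(x₁) + γ_i·δ₁(x₁). -/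

import Mathlib

theorem stmt_17 (h : ℕ) (hh : 1 ≤ h) (β : ℝ) (hβ : 0 ≤ β)
    (r γ : ℕ → ℝ)
    (hr : ∀ i, 1 ≤ i → i ≤ h → 0 < r i)
    (hrsum : ∑ i ∈ Finset.Icc 1 h, r i = 1)
    (hγ0 : 0 ≤ γ 1)
    (hγmono : ∀ i i', 1 ≤ i → i < i' → i' ≤ h → γ i < γ i')
    (j : ℕ) (hj1 : 1 ≤ j) (hjh : j ≤ h)
    (ε' : ℝ) (hε'0 : 0 < ε') (hε' : ε' < γ j * β)
    (l₂ : ℝ → ℝ) (hl₂mono : StrictMono l₂) (hl₂cont : Continuous l₂)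
    (hl₂0 : l₂ 0 = 1 + ε')
    (hl₂x : l₂ (∑ p ∈ Finset.Icc j h, r p) = 1 + γ j * β) :
    (∀ i, 1 ≤ i → i < j →
      1 + γ i * β ≤ l₂ (∑ p ∈ Finset.Icc j h, r p) + γ i * 0) ∧
    (∀ i, j ≤ i → i ≤ h →
      l₂ (∑ p ∈ Finset.Icc j h, r p) + γ i * 0 ≤ 1 + γ i * β) := by
  rw [hl₂x]
  constructor
  · intro i hi1 hij
    have : γ i < γ j := hγmono i j hi1 hij hjh
    nlinarith
  · intro i hji hih
    rcases eq_or_lt_of_le hji with rfl | hlt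
    · simp
    · have : γ j < γ i := hγmono j i hj1 hlt hih
      nlinarith
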